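/- arXiv:1311.2879 — 5 statements merged into one kernel-verified Lean document; each statement's English description precedes it below -/
import Mathlib

section
/- For the single-machine common due date problem with a fixed job sequence and no idle time, there exists an optimal start time s* such that either s* = 0 (the first job starts at time 0) or some job completes exactly at the due date D (i.e., s* + Σ_{j≤i} P_j = D for some i). -/
/-- Affine interpolation for a single penalty term on a breakpoint-free interval. -/
lemma stmt4_interp (ai bi S D a u c : ℝ) (hau : a ≤ u) (huc : u ≤ c)
    (h : D - S ≤ a ∨ c ≤ D - S) :
    (c - a) * (ai * max 0 (D - (u + S)) + bi * max 0 ((u + S) - D)) =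
    (c - u) * (ai * max 0 (D - (a + S)) + bi * max 0 ((a + S) - D)) +
    (u - a) * (ai * max 0 (D - (c + S)) + bi * max 0 ((c + S) - D)) := by
  rcases h with h | h
  · have h1 : max 0 (D - (u + S)) = 0 := max_eq_left (by linarith)
    have h2 : max 0 (D - (a + S)) = 0 := max_eq_left (by linarith)
    have h3 : max 0 (D - (c + S)) = 0 := max_eq_left (by linarith)
    have h4 : max 0 ((u + S) - D) = (u + S) - D := max_eq_right (by linarith)
    have h5 : max 0 ((a + S) - D) = (a + S) - D := max_eq_right (by linarith)
    have h6 : max 0 ((c + S) - D) = (c + S) - D := max_eq_right (by linarith)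
    rw [h1, h2, h3, h4, h5, h6]; ring
  · have h1 : max 0 (D - (u + S)) = D - (u + S) := max_eq_right (by linarith)
    have h2 : max 0 (D - (a + S)) = D - (a + S) := max_eq_right (by linarith)
    have h3 : max 0 (D - (c + S)) = D - (c + S) := max_eq_right (by linarith)
    have h4 : max 0 ((u + S) - D) = 0 := max_eq_left (by linarith)
    have h5 : max 0 ((a + S) - D) = 0 := max_eq_left (by linarith)
    have h6 : max 0 ((c + S) - D) = 0 := max_eq_left (by linarith)
    rw [h1, h2, h3, h4, h5, h6]; ring

/-- There is an optimal start time `s*` such that either `s* = 0`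
or some job completes exactly at the due date. -/
theorem stmt4 (n : ℕ) (P α β : ℕ → ℝ) (D : ℝ)
    (hn : 1 ≤ n)
    (hP : ∀ i, 1 ≤ i → i ≤ n → 0 < P i)
    (hα : ∀ i, 1 ≤ i → i ≤ n → 0 < α i)
    (hβ : ∀ i, 1 ≤ i → i ≤ n → 0 < β i)
    (hD : 0 < D)
    (F : ℝ → ℝ)
    (hF : ∀ s : ℝ, F s = ∑ i ∈ Finset.Icc 1 n,
        (α i * max 0 (D - (s + ∑ l ∈ Finset.Icc 1 i, P l)) +
          β i * max 0 ((s + ∑ l ∈ Finset.Icc 1 i, P l) - D))) :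
    ∃ s : ℝ, 0 ≤ s ∧ (∀ t : ℝ, 0 ≤ t → F s ≤ F t) ∧
      (s = 0 ∨ ∃ i ∈ Finset.Icc 1 n, s + ∑ l ∈ Finset.Icc 1 i, P l = D) := by
  set S : ℕ → ℝ := fun i => ∑ l ∈ Finset.Icc 1 i, P l with hS
  -- candidate set
  set T : Finset ℝ :=
    insert 0 (((Finset.Icc 1 n).image fun i => D - S i).filter fun x => 0 ≤ x) with hT
  have h0T : (0 : ℝ) ∈ T := Finset.mem_insert_self _ _
  -- interpolation lemma for F
  have key : ∀ a u c : ℝ, a ≤ u → u ≤ c →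
      (∀ i ∈ Finset.Icc 1 n, D - S i ≤ a ∨ c ≤ D - S i) →
      (c - a) * F u = (c - u) * F a + (u - a) * F c := by
    intro a u c hau huc hbp
    rw [hF, hF, hF, Finset.mul_sum, Finset.mul_sum, Finset.mul_sum,
      ← Finset.sum_add_distrib]
    exact Finset.sum_congr rfl fun i hi =>
      stmt4_interp (α i) (β i) (S i) D a u c hau huc (hbp i hi)
  -- monotonicity beyond all breakpoints
  have mono : ∀ a u : ℝ, a ≤ u → (∀ i ∈ Finset.Icc 1 n, D - S i ≤ a) →
      F a ≤ F u := by
    intro a u hau hbp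
    rw [hF, hF]
    apply Finset.sum_le_sum
    intro i hi
    obtain ⟨hi1, hi2⟩ := Finset.mem_Icc.mp hi
    have hb := hbp i hi
    have hβi := (hβ i hi1 hi2).le
    have h1 : max 0 (D - (a + S i)) = 0 := max_eq_left (by linarith)
    have h2 : max 0 (D - (u + S i)) = 0 := max_eq_left (by linarith)
    have h3 : max 0 ((a + S i) - D) = (a + S i) - D := max_eq_right (by linarith)
    have h4 : max 0 ((u + S i) - D) = (u + S i) - D := max_eq_right (by linarith)
    rw [h1, h2, h3, h4]
    nlinarith
  -- choose minimizer over T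
  obtain ⟨s, hsT, hsmin⟩ := T.exists_min_image F ⟨0, h0T⟩
  have hs0 : 0 ≤ s := by
    rcases Finset.mem_insert.mp hsT with h | h
    · exact h.ge
    · exact (Finset.mem_filter.mp h).2
  refine ⟨s, hs0, ?_, ?_⟩
  · -- global optimality
    intro t ht
    -- the largest candidate ≤ t
    have hAne : (T.filter fun x => x ≤ t).Nonempty :=
      ⟨0, Finset.mem_filter.mpr ⟨h0T, ht⟩⟩
    set a := (T.filter fun x => x ≤ t).max' hAne with ha
    have haA := (T.filter fun x => x ≤ t).max'_mem hAne
    have haT : a ∈ T := (Finset.mem_filter.mp haA).1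
    have hat : a ≤ t := (Finset.mem_filter.mp haA).2
    have hFsa : F s ≤ F a := hsmin a haT
    have hmemT : ∀ i ∈ Finset.Icc 1 n, 0 ≤ D - S i → D - S i ∈ T := by
      intro i hi hpos
      exact Finset.mem_insert_of_mem (Finset.mem_filter.mpr
        ⟨Finset.mem_image.mpr ⟨i, hi, rfl⟩, hpos⟩)
    by_cases hB : ∃ c ∈ T, t ≤ c
    · -- take smallest candidate ≥ t
      have hBne : (T.filter fun x => t ≤ x).Nonempty := by
        obtain ⟨c, hcT, hct⟩ := hB
        exact ⟨c, Finset.mem_filter.mpr ⟨hcT, hct⟩⟩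
      set c := (T.filter fun x => t ≤ x).min' hBne with hc
      have hcB := (T.filter fun x => t ≤ x).min'_mem hBne
      have hcT : c ∈ T := (Finset.mem_filter.mp hcB).1
      have htc : t ≤ c := (Finset.mem_filter.mp hcB).2
      have hFsc : F s ≤ F c := hsmin c hcT
      have hbp : ∀ i ∈ Finset.Icc 1 n, D - S i ≤ a ∨ c ≤ D - S i := by
        intro i hi
        by_cases h : D - S i ≤ a
        · exact Or.inl h
        · right
          push_neg at h
          have hpos : 0 ≤ D - S i := by
            have : (0:ℝ) ≤ a := by
              rcases Finset.mem_insert.mp haT with h' | h'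
              · exact h'.ge
              · exact (Finset.mem_filter.mp h').2
            linarith
          have hmem := hmemT i hi hpos
          have hnt : ¬ D - S i ≤ t := by
            intro hle
            exact absurd ((T.filter fun x => x ≤ t).le_max'
              _ (Finset.mem_filter.mpr ⟨hmem, hle⟩)) (not_le.mpr h)
          push_neg at hnt
          exact (T.filter fun x => t ≤ x).min'_le _
            (Finset.mem_filter.mpr ⟨hmem, hnt.le⟩)
      have hkey := key a t c hat htc hbp
      rcases eq_or_lt_of_le (hat.trans htc) with hac | hac
      · -- a = c, so t = a
        have : t = a := le_antisymm (hac ▸ htc) hat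
        exact this ▸ hFsa
      · have h1 : (c - a) * F s ≤ (c - a) * F t := by
          rw [hkey]
          nlinarith
        exact (mul_le_mul_iff_of_pos_left (by linarith : (0:ℝ) < c - a)).mp h1
    · -- all candidates < t : F increasing past a
      push_neg at hB
      have hbp : ∀ i ∈ Finset.Icc 1 n, D - S i ≤ a := by
        intro i hi
        by_contra h
        push_neg at h
        have hpos : 0 ≤ D - S i := by
          have : (0:ℝ) ≤ a := by
            rcases Finset.mem_insert.mp haT with h' | h'
            · exact h'.ge
            · exact (Finset.mem_filter.mp h').2
          linarith
        have hmem := hmemT i hi hpos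
        have hlt := hB _ hmem
        exact absurd ((T.filter fun x => x ≤ t).le_max'
          _ (Finset.mem_filter.mpr ⟨hmem, hlt.le⟩)) (not_le.mpr h)
      exact hFsa.trans (mono a t hat hbp)
  · -- structure of s
    rcases Finset.mem_insert.mp hsT with h | h
    · exact Or.inl h
    · obtain ⟨i, hi, hie⟩ := Finset.mem_image.mp (Finset.mem_filter.mp h).1
      exact Or.inr ⟨i, hi, by rw [← hie]; ring⟩
end

section
/- Suppose at start time s exactly the jobs 1,...,j−1 are early or on-time and jobs j,...,n are strictly tardy. Left-shifting by t ∈ (0, min{s, C_j(s) − D}] changes the penalty by t·(Σ_{i<j} α_i − Σ_{i≥j} β_i). In particular, the change is linear in t, so if any shift amount in this range improves the solution, the maximal shift min{s, C_j(s) − D} gives the greatest improvement. -/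
/-- If at start time `s` jobs `1,…,j-1` are early or on time and
jobs `j,…,n` are strictly tardy, then a left shift by `t ∈ (0, min s (C_j - D)]`
changes the total penalty by `t * (∑_{i<j} α i - ∑_{i≥j} β i)`; consequently, if
some shift in this range improves the solution, the maximal shift gives the
greatest improvement. -/
theorem stmt6 (n j : ℕ) (P α β : ℕ → ℝ) (D s : ℝ)
    (hP : ∀ i, 1 ≤ i → i ≤ n → 0 < P i)
    (hα : ∀ i, 1 ≤ i → i ≤ n → 0 < α i)
    (hβ : ∀ i, 1 ≤ i → i ≤ n → 0 < β i)
    (hs : 0 ≤ s)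
    (hj1 : 1 ≤ j) (hjn : j ≤ n)
    (hearly : ∀ i, 1 ≤ i → i < j → s + ∑ l ∈ Finset.Icc 1 i, P l ≤ D)
    (htardy : ∀ i, j ≤ i → i ≤ n → s + ∑ l ∈ Finset.Icc 1 i, P l > D)
    (F : ℝ → ℝ)
    (hF : ∀ t : ℝ, F t = ∑ i ∈ Finset.Icc 1 n,
        (α i * max 0 (D - (t + ∑ l ∈ Finset.Icc 1 i, P l)) +
          β i * max 0 ((t + ∑ l ∈ Finset.Icc 1 i, P l) - D))) :
    (∀ t : ℝ, 0 < t → t ≤ min s ((s + ∑ l ∈ Finset.Icc 1 j, P l) - D) →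
        F (s - t) - F s =
          t * ((∑ i ∈ Finset.Icc 1 (j - 1), α i) - ∑ i ∈ Finset.Icc j n, β i)) ∧
      ((∃ t : ℝ, 0 < t ∧ t ≤ min s ((s + ∑ l ∈ Finset.Icc 1 j, P l) - D) ∧
          F (s - t) < F s) →
        ∀ t : ℝ, 0 < t → t ≤ min s ((s + ∑ l ∈ Finset.Icc 1 j, P l) - D) →
          F (s - min s ((s + ∑ l ∈ Finset.Icc 1 j, P l) - D)) ≤ F (s - t)) := by
  have hsplit : ∀ f : ℕ → ℝ, ∑ i ∈ Finset.Icc 1 n, f i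
      = ∑ i ∈ Finset.Icc 1 (j - 1), f i + ∑ i ∈ Finset.Icc j n, f i := by
    intro f
    have h1 : Finset.Icc 1 n = Finset.Ioc 0 n := by rw [← Finset.Icc_add_one_left_eq_Ioc]; rfl
    have h2 : Finset.Icc 1 (j - 1) = Finset.Ioc 0 (j - 1) := by
      rw [← Finset.Icc_add_one_left_eq_Ioc]; rfl
    have h3 : Finset.Icc j n = Finset.Ioc (j - 1) n := by
      rw [← Finset.Icc_add_one_left_eq_Ioc]; congr 1; omega
    rw [h1, h2, h3, Finset.sum_Ioc_consecutive]
    · exact Nat.zero_le _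
    · omega
  have hmono : ∀ i, j ≤ i → i ≤ n →
      (∑ l ∈ Finset.Icc 1 j, P l) ≤ ∑ l ∈ Finset.Icc 1 i, P l := by
    intro i hji hin
    apply Finset.sum_le_sum_of_subset_of_nonneg
    · exact Finset.Icc_subset_Icc_right hji
    · intro l hl _
      have hl' := Finset.mem_Icc.mp hl
      exact (hP l hl'.1 (le_trans hl'.2 hin)).le
  have key : ∀ t : ℝ, 0 < t → t ≤ min s ((s + ∑ l ∈ Finset.Icc 1 j, P l) - D) →
      F (s - t) - F s =
        t * ((∑ i ∈ Finset.Icc 1 (j - 1), α i) - ∑ i ∈ Finset.Icc j n, β i) := by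
    intro t ht0 htle
    have hts : t ≤ s := le_trans htle (min_le_left _ _)
    have htC : t ≤ (s + ∑ l ∈ Finset.Icc 1 j, P l) - D :=
      le_trans htle (min_le_right _ _)
    have hE : ∀ i ∈ Finset.Icc 1 (j - 1),
        (α i * max 0 (D - (s - t + ∑ l ∈ Finset.Icc 1 i, P l)) +
          β i * max 0 ((s - t + ∑ l ∈ Finset.Icc 1 i, P l) - D))
        - (α i * max 0 (D - (s + ∑ l ∈ Finset.Icc 1 i, P l)) +
          β i * max 0 ((s + ∑ l ∈ Finset.Icc 1 i, P l) - D)) = α i * t := by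
      intro i hi
      have hi' := Finset.mem_Icc.mp hi
      have hij : i < j := by omega
      have he := hearly i hi'.1 hij
      rw [max_eq_right (by linarith : (0:ℝ) ≤ D - (s - t + ∑ l ∈ Finset.Icc 1 i, P l)),
          max_eq_left (by linarith : (s - t + ∑ l ∈ Finset.Icc 1 i, P l) - D ≤ 0),
          max_eq_right (by linarith : (0:ℝ) ≤ D - (s + ∑ l ∈ Finset.Icc 1 i, P l)),
          max_eq_left (by linarith : (s + ∑ l ∈ Finset.Icc 1 i, P l) - D ≤ 0)]
      ring
    have hT : ∀ i ∈ Finset.Icc j n,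
        (α i * max 0 (D - (s - t + ∑ l ∈ Finset.Icc 1 i, P l)) +
          β i * max 0 ((s - t + ∑ l ∈ Finset.Icc 1 i, P l) - D))
        - (α i * max 0 (D - (s + ∑ l ∈ Finset.Icc 1 i, P l)) +
          β i * max 0 ((s + ∑ l ∈ Finset.Icc 1 i, P l) - D)) = -(β i * t) := by
      intro i hi
      have hi' := Finset.mem_Icc.mp hi
      have hta := htardy i hi'.1 hi'.2
      have hm := hmono i hi'.1 hi'.2
      rw [max_eq_left (by linarith : D - (s - t + ∑ l ∈ Finset.Icc 1 i, P l) ≤ 0),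
          max_eq_right (by linarith : (0:ℝ) ≤ (s - t + ∑ l ∈ Finset.Icc 1 i, P l) - D),
          max_eq_left (by linarith : D - (s + ∑ l ∈ Finset.Icc 1 i, P l) ≤ 0),
          max_eq_right (by linarith : (0:ℝ) ≤ (s + ∑ l ∈ Finset.Icc 1 i, P l) - D)]
      ring
    have hA : (∑ i ∈ Finset.Icc 1 (j - 1),
          (α i * max 0 (D - (s - t + ∑ l ∈ Finset.Icc 1 i, P l)) +
            β i * max 0 ((s - t + ∑ l ∈ Finset.Icc 1 i, P l) - D)))
        - (∑ i ∈ Finset.Icc 1 (j - 1),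
          (α i * max 0 (D - (s + ∑ l ∈ Finset.Icc 1 i, P l)) +
            β i * max 0 ((s + ∑ l ∈ Finset.Icc 1 i, P l) - D)))
        = (∑ i ∈ Finset.Icc 1 (j - 1), α i) * t := by
      rw [← Finset.sum_sub_distrib, Finset.sum_mul]
      exact Finset.sum_congr rfl hE
    have hB : (∑ i ∈ Finset.Icc j n,
          (α i * max 0 (D - (s - t + ∑ l ∈ Finset.Icc 1 i, P l)) +
            β i * max 0 ((s - t + ∑ l ∈ Finset.Icc 1 i, P l) - D)))
        - (∑ i ∈ Finset.Icc j n,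
          (α i * max 0 (D - (s + ∑ l ∈ Finset.Icc 1 i, P l)) +
            β i * max 0 ((s + ∑ l ∈ Finset.Icc 1 i, P l) - D)))
        = -((∑ i ∈ Finset.Icc j n, β i) * t) := by
      rw [← Finset.sum_sub_distrib, Finset.sum_mul, ← Finset.sum_neg_distrib]
      exact Finset.sum_congr rfl hT
    rw [hF (s - t), hF s, hsplit, hsplit]
    linear_combination hA + hB
  refine ⟨key, ?_⟩
  rintro ⟨t0, ht0, ht0le, hlt⟩ t ht htle
  have hd0 := key t0 ht0 ht0le
  have hcneg : (∑ i ∈ Finset.Icc 1 (j - 1), α i) - ∑ i ∈ Finset.Icc j n, β i < 0 := by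
    nlinarith
  have htm0 : 0 < min s ((s + ∑ l ∈ Finset.Icc 1 j, P l) - D) := lt_of_lt_of_le ht0 ht0le
  have hdm := key _ htm0 le_rfl
  have hdt := key t ht htle
  nlinarith [mul_le_mul_of_nonpos_right htle hcneg.le]
end

section
/- With start time s and first early-to-tardy transition at job j (jobs i < j satisfy C_i(s) ≤ D, jobs i ≥ j satisfy C_i(s) > D), the condition Σ_{i<j} α_i ≥ Σ_{i≥j} β_i implies that no left shift (decrease of s) can strictly decrease the total penalty F. -/
/-- If at start time `s` the first early-to-tardy transition is at
job `j` and `∑_{i<j} α i ≥ ∑_{i≥j} β i`, then no left shift can strictly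
decrease the total penalty `F`. -/
theorem stmt7 (n j : ℕ) (P α β : ℕ → ℝ) (D s : ℝ)
    (hP : ∀ i, 1 ≤ i → i ≤ n → 0 < P i)
    (hα : ∀ i, 1 ≤ i → i ≤ n → 0 < α i)
    (hβ : ∀ i, 1 ≤ i → i ≤ n → 0 < β i)
    (hs0 : 0 ≤ s) (hsD : s ≤ D - P 1)
    (hj1 : 1 ≤ j) (hjn : j ≤ n)
    (hearly : ∀ i, 1 ≤ i → i < j → s + ∑ l ∈ Finset.Icc 1 i, P l ≤ D)
    (htardy : ∀ i, j ≤ i → i ≤ n → s + ∑ l ∈ Finset.Icc 1 i, P l > D)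
    (F : ℝ → ℝ)
    (hF : ∀ t : ℝ, F t = ∑ i ∈ Finset.Icc 1 n,
        (α i * max 0 (D - (t + ∑ l ∈ Finset.Icc 1 i, P l)) +
          β i * max 0 ((t + ∑ l ∈ Finset.Icc 1 i, P l) - D)))
    (hcond : (∑ i ∈ Finset.Icc 1 (j - 1), α i) ≥ ∑ i ∈ Finset.Icc j n, β i) :
    ∀ s' : ℝ, 0 ≤ s' → s' < s → ¬ F s' < F s := by
  intro s' hs'0 hs's
  rw [not_lt]
  have hΔ : 0 < s - s' := by linarith
  have key : F s + (∑ i ∈ Finset.Icc 1 n, (if i < j then α i else -β i)) * (s - s')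
      ≤ F s' := by
    rw [hF s, hF s', Finset.sum_mul, ← Finset.sum_add_distrib]
    apply Finset.sum_le_sum
    intro i hi
    simp only [Finset.mem_Icc] at hi
    have hC' : s' + ∑ l ∈ Finset.Icc 1 i, P l
        = (s + ∑ l ∈ Finset.Icc 1 i, P l) - (s - s') := by ring
    set C := s + ∑ l ∈ Finset.Icc 1 i, P l with hCdef
    by_cases hij : i < j
    · have hCD : C ≤ D := hearly i hi.1 hij
      rw [if_pos hij, hC',
          max_eq_left (by linarith : C - D ≤ 0),
          max_eq_left (by linarith : C - (s - s') - D ≤ 0),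
          max_eq_right (by linarith : (0:ℝ) ≤ D - C),
          max_eq_right (by linarith : (0:ℝ) ≤ D - (C - (s - s')))]
      ring_nf
      nlinarith
    · push_neg at hij
      have hCD : C > D := htardy i hij hi.2
      have hα' := hα i hi.1 hi.2
      have hβ' := hβ i hi.1 hi.2
      rw [if_neg (not_lt.mpr hij), hC',
          max_eq_left (by linarith : D - C ≤ 0),
          max_eq_right (by linarith : (0:ℝ) ≤ C - D)]
      have h3 : 0 ≤ max 0 (D - (C - (s - s'))) := le_max_left _ _
      have h4 : C - (s - s') - D ≤ max 0 (C - (s - s') - D) := le_max_right _ _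
      nlinarith
  have hsum : 0 ≤ (∑ i ∈ Finset.Icc 1 n, (if i < j then α i else -β i)) := by
    have hsplit : Finset.Icc 1 n = Finset.Icc 1 (j - 1) ∪ Finset.Icc j n := by
      ext x
      simp only [Finset.mem_Icc, Finset.mem_union]
      omega
    have hdisj : Disjoint (Finset.Icc 1 (j - 1)) (Finset.Icc j n) := by
      rw [Finset.disjoint_left]
      intro x hx hx'
      simp only [Finset.mem_Icc] at hx hx'
      omega
    rw [hsplit, Finset.sum_union hdisj]
    have h1 : ∑ i ∈ Finset.Icc 1 (j - 1), (if i < j then α i else -β i)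
        = ∑ i ∈ Finset.Icc 1 (j - 1), α i := by
      apply Finset.sum_congr rfl
      intro x hx
      simp only [Finset.mem_Icc] at hx
      rw [if_pos (by omega)]
    have h2 : ∑ i ∈ Finset.Icc j n, (if i < j then α i else -β i)
        = -∑ i ∈ Finset.Icc j n, β i := by
      rw [← Finset.sum_neg_distrib]
      apply Finset.sum_congr rfl
      intro x hx
      simp only [Finset.mem_Icc] at hx
      rw [if_neg (by omega)]
    rw [h1, h2]
    linarith
  nlinarith [mul_nonneg hsum hΔ.le]
end

section
/- For the single-machine problem with a fixed sequence, the optimal total penalty equals min over j ∈ {0,1,...,n} of F(max{0, D − S_j}) where S_j = Σ_{l≤j} P_l (S_0 = 0); that is, it suffices to evaluate F at start times making some job complete exactly at D, together with start time 0. -/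
lemma aux13 (n : ℕ) (P α β : ℕ → ℝ) (D u v s : ℝ) (F : ℝ → ℝ)
    (hF : ∀ s : ℝ, F s = ∑ i ∈ Finset.Icc 1 n,
        (α i * max 0 (D - (s + ∑ l ∈ Finset.Icc 1 i, P l)) +
          β i * max 0 ((s + ∑ l ∈ Finset.Icc 1 i, P l) - D)))
    (hus : u ≤ s) (hsv : s ≤ v)
    (hsep : ∀ i ∈ Finset.Icc 1 n,
      D - ∑ l ∈ Finset.Icc 1 i, P l ≤ u ∨ v ≤ D - ∑ l ∈ Finset.Icc 1 i, P l) :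
    min (F u) (F v) ≤ F s := by
  set slope : ℕ → ℝ := fun i => if D - ∑ l ∈ Finset.Icc 1 i, P l ≤ u then β i else -(α i) with hslope
  set cst : ℕ → ℝ := fun i => if D - ∑ l ∈ Finset.Icc 1 i, P l ≤ u
      then -(β i * (D - ∑ l ∈ Finset.Icc 1 i, P l))
      else α i * (D - ∑ l ∈ Finset.Icc 1 i, P l) with hcst
  have key : ∀ w, u ≤ w → w ≤ v →
      F w = (∑ i ∈ Finset.Icc 1 n, slope i) * w + ∑ i ∈ Finset.Icc 1 n, cst i := by
    intro w hw1 hw2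
    rw [hF, Finset.sum_mul, ← Finset.sum_add_distrib]
    refine Finset.sum_congr rfl fun i hi => ?_
    by_cases h : D - ∑ l ∈ Finset.Icc 1 i, P l ≤ u
    · simp only [hslope, hcst, if_pos h]
      have h1 : D - (w + ∑ l ∈ Finset.Icc 1 i, P l) ≤ 0 := by linarith
      have h2 : (0:ℝ) ≤ (w + ∑ l ∈ Finset.Icc 1 i, P l) - D := by linarith
      rw [max_eq_left h1, max_eq_right h2]; ring
    · have hv : v ≤ D - ∑ l ∈ Finset.Icc 1 i, P l := (hsep i hi).resolve_left h
      simp only [hslope, hcst, if_neg h]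
      have h1 : (0:ℝ) ≤ D - (w + ∑ l ∈ Finset.Icc 1 i, P l) := by linarith
      have h2 : (w + ∑ l ∈ Finset.Icc 1 i, P l) - D ≤ 0 := by linarith
      rw [max_eq_right h1, max_eq_left h2]; ring
  rcases le_total 0 (∑ i ∈ Finset.Icc 1 n, slope i) with hB | hB
  · refine (min_le_left _ _).trans ?_
    rw [key u le_rfl (hus.trans hsv), key s hus hsv]
    nlinarith
  · refine (min_le_right _ _).trans ?_
    rw [key v (hus.trans hsv) le_rfl, key s hus hsv]
    nlinarith



/-- For a fixed sequence, the minimum of the total penalty `F`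
over all start times `s ≥ 0` equals the minimum of `F (max 0 (D - S j))` over
`j ∈ {0,…,n}`: it suffices to evaluate `F` at start times making some job
complete exactly at `D`, together with start time `0`. -/
theorem stmt13 (n : ℕ) (P α β : ℕ → ℝ) (D : ℝ)
    (hP : ∀ i, 1 ≤ i → i ≤ n → 0 < P i)
    (hα : ∀ i, 1 ≤ i → i ≤ n → 0 < α i)
    (hβ : ∀ i, 1 ≤ i → i ≤ n → 0 < β i)
    (hD : 0 < D)
    (F : ℝ → ℝ)
    (hF : ∀ s : ℝ, F s = ∑ i ∈ Finset.Icc 1 n,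
        (α i * max 0 (D - (s + ∑ l ∈ Finset.Icc 1 i, P l)) +
          β i * max 0 ((s + ∑ l ∈ Finset.Icc 1 i, P l) - D))) :
    IsLeast (F '' Set.Ici (0 : ℝ))
      ((Finset.Icc 0 n).inf' (Finset.nonempty_Icc.mpr (Nat.zero_le n))
        (fun j => F (max 0 (D - ∑ l ∈ Finset.Icc 1 j, P l)))) := by

  set S : ℕ → ℝ := fun j => ∑ l ∈ Finset.Icc 1 j, P l with hS
  have hSnn : ∀ i, i ≤ n → 0 ≤ S i := by
    intro i hi
    exact Finset.sum_nonneg fun l hl => by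
      have := Finset.mem_Icc.mp hl
      exact (hP l this.1 (this.2.trans hi)).le
  have hSmono : ∀ i j, i ≤ j → j ≤ n → S i ≤ S j := by
    intro i j hij hj
    refine Finset.sum_le_sum_of_subset_of_nonneg (Finset.Icc_subset_Icc_right hij) ?_
    intro x hx _
    have := Finset.mem_Icc.mp hx
    exact (hP x this.1 (this.2.trans hj)).le
  constructor
  · obtain ⟨j, hj, hje⟩ := Finset.exists_mem_eq_inf' (Finset.nonempty_Icc.mpr (Nat.zero_le n))
      (fun j => F (max 0 (D - S j)))
    exact ⟨max 0 (D - S j), Set.mem_Ici.mpr (le_max_left _ _), hje.symm⟩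
  · rintro y ⟨s, hs, rfl⟩
    simp only [Set.mem_Ici] at hs
    rcases le_or_gt D s with hsD | hsD
    · -- F D ≤ F s, candidate j = 0
      have h0 : F (max 0 (D - S 0)) ≤ F s := by
        have hS0 : S 0 = 0 := by simp [hS]
        rw [hS0, sub_zero, max_eq_right hD.le, hF, hF]
        refine Finset.sum_le_sum fun i hi => ?_
        obtain ⟨hi1, hi2⟩ := Finset.mem_Icc.mp hi
        have hβi := hβ i hi1 hi2
        have hαi := hα i hi1 hi2
        have hSi := hSnn i hi2
        have h1 : max 0 (D - (D + S i)) = 0 := max_eq_left (by linarith)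
        have h2 : max 0 ((D + S i) - D) = S i := by rw [max_eq_right (by linarith)]; ring_nf
        rw [h1, h2]
        have h3 : (0:ℝ) ≤ max 0 (D - (s + S i)) := le_max_left _ _
        have h4 : (s + S i) - D ≤ max 0 ((s + S i) - D) := le_max_right _ _
        nlinarith
      refine le_trans (Finset.inf'_le _ ?_) h0
      exact Finset.mem_Icc.mpr ⟨le_refl 0, Nat.zero_le n⟩
    rcases lt_or_ge s (D - S n) with hsn | hsn
    · -- F (D - S n) ≤ F s termwise, candidate j = n
      have hn : F (max 0 (D - S n)) ≤ F s := by
        have hmax : max 0 (D - S n) = D - S n := max_eq_right (by linarith)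
        rw [hmax, hF, hF]
        refine Finset.sum_le_sum fun i hi => ?_
        obtain ⟨hi1, hi2⟩ := Finset.mem_Icc.mp hi
        have hβi := hβ i hi1 hi2
        have hαi := hα i hi1 hi2
        have hSle : S i ≤ S n := hSmono i n hi2 le_rfl
        have h1 : max 0 (D - ((D - S n) + S i)) = S n - S i :=
          by rw [max_eq_right (by linarith)]; ring_nf
        have h2 : max 0 (((D - S n) + S i) - D) = 0 := max_eq_left (by linarith)
        rw [h1, h2]
        have h3 : D - (s + S i) ≤ max 0 (D - (s + S i)) := le_max_right _ _
        have h4 : (0:ℝ) ≤ max 0 ((s + S i) - D) := le_max_left _ _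
        nlinarith
      refine le_trans (Finset.inf'_le _ ?_) hn
      exact Finset.mem_Icc.mpr ⟨Nat.zero_le n, le_refl n⟩
    · -- interior case
      set J : Finset ℕ := (Finset.Icc 0 n).filter (fun j => max 0 (D - S j) ≤ s) with hJ
      have hnJ : n ∈ J := by
        refine Finset.mem_filter.mpr ⟨Finset.mem_Icc.mpr ⟨Nat.zero_le n, le_rfl⟩, ?_⟩
        exact max_le hs (by linarith)
      have hJne : J.Nonempty := ⟨n, hnJ⟩
      set j := J.min' hJne with hj
      have hjJ : j ∈ J := Finset.min'_mem _ _
      obtain ⟨hjIcc, hju⟩ := Finset.mem_filter.mp hjJ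
      have hjn : j ≤ n := (Finset.mem_Icc.mp hjIcc).2
      have hj0 : 1 ≤ j := by
        rcases Nat.eq_zero_or_pos j with h0 | h0
        · exfalso
          have : max 0 (D - S 0) ≤ s := h0 ▸ hju
          have hS0 : S 0 = 0 := by simp [hS]
          rw [hS0, sub_zero, max_eq_right hD.le] at this
          linarith
        · exact h0
      have hkIcc : j - 1 ∈ Finset.Icc 0 n := Finset.mem_Icc.mpr ⟨Nat.zero_le _, le_trans (Nat.sub_le _ _) hjn⟩
      have hkJ : j - 1 ∉ J := by
        intro hmem
        have := Finset.min'_le J _ hmem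
        omega
      have hkgt : s < max 0 (D - S (j - 1)) := by
        by_contra hc
        push_neg at hc
        exact hkJ (Finset.mem_filter.mpr ⟨hkIcc, hc⟩)
      have hsep : ∀ i ∈ Finset.Icc 1 n,
          D - S i ≤ max 0 (D - S j) ∨ max 0 (D - S (j-1)) ≤ D - S i := by
        intro i hi
        obtain ⟨hi1, hi2⟩ := Finset.mem_Icc.mp hi
        rcases le_or_gt j i with hji | hji
        · left
          have : S j ≤ S i := hSmono j i hji hi2
          exact le_trans (by linarith) (le_max_right _ _)
        · right
          have hik : i ≤ j - 1 := by omega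
          have hSik : S i ≤ S (j-1) := hSmono i (j-1) hik (le_trans (Nat.sub_le _ _) hjn)
          have hvpos : 0 < D - S (j-1) := by
            rcases le_or_gt (D - S (j-1)) 0 with h | h
            · rw [max_eq_left h] at hkgt; linarith
            · exact h
          rw [max_eq_right hvpos.le]; linarith
      have hmin := aux13 n P α β D (max 0 (D - S j)) (max 0 (D - S (j-1))) s F hF hju hkgt.le hsep
      refine le_trans (le_min ?_ ?_) hmin
      · exact Finset.inf'_le _ hjIcc
      · exact Finset.inf'_le _ hkIcc
end

section
/- Suppose α_i = α and β_i = β for all i (symmetric weights within each type). For a fixed sequence started at s with early set {1,...,j−1} and tardy set {j,...,n}, the penalty change from a left shift by t is t·((j−1)α − (n−j+1)β); hence an optimal start time puts the transition index j at the smallest j with (j−1)α ≥ (n−j+1)β, i.e., j ≥ (nβ + α + β)/(α + β). -/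
/-- With symmetric weights `α` (earliness) and `β` (tardiness)
and transition index `j` at start time `s` (jobs `1,…,j-1` early, jobs
`j,…,n` tardy), a left shift by `t ∈ (0, min s (C_j - D)]` changes the penalty
by `t * ((j-1)·α - (n-j+1)·β)`; hence if `(j-1)·α ≥ (n-j+1)·β` no such left
shift improves the solution, while if `(j-1)·α < (n-j+1)·β` every such left
shift improves it — so an optimal start time puts the transition at the
smallest `j` with `(j-1)·α ≥ (n-j+1)·β`. -/
theorem stmt19 (n j : ℕ) (P : ℕ → ℝ) (α β D s : ℝ)
    (hP : ∀ i, 1 ≤ i → i ≤ n → 0 < P i)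
    (hα : 0 < α) (hβ : 0 < β)
    (hs : 0 ≤ s)
    (hj1 : 1 ≤ j) (hjn : j ≤ n)
    (hearly : ∀ i, 1 ≤ i → i < j → s + ∑ l ∈ Finset.Icc 1 i, P l ≤ D)
    (htardy : ∀ i, j ≤ i → i ≤ n → s + ∑ l ∈ Finset.Icc 1 i, P l > D)
    (F : ℝ → ℝ)
    (hF : ∀ t : ℝ, F t = ∑ i ∈ Finset.Icc 1 n,
        (α * max 0 (D - (t + ∑ l ∈ Finset.Icc 1 i, P l)) +
          β * max 0 ((t + ∑ l ∈ Finset.Icc 1 i, P l) - D))) :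
    (∀ t : ℝ, 0 < t → t ≤ min s ((s + ∑ l ∈ Finset.Icc 1 j, P l) - D) →
        F (s - t) - F s = t * (((j : ℝ) - 1) * α - ((n : ℝ) - (j : ℝ) + 1) * β)) ∧
    (((j : ℝ) - 1) * α ≥ ((n : ℝ) - (j : ℝ) + 1) * β →
      ∀ t : ℝ, 0 < t → t ≤ min s ((s + ∑ l ∈ Finset.Icc 1 j, P l) - D) →
        F s ≤ F (s - t)) ∧
    (((j : ℝ) - 1) * α < ((n : ℝ) - (j : ℝ) + 1) * β →
      ∀ t : ℝ, 0 < t → t ≤ min s ((s + ∑ l ∈ Finset.Icc 1 j, P l) - D) →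
        F (s - t) < F s) := by
  have key : ∀ t : ℝ, 0 < t → t ≤ min s ((s + ∑ l ∈ Finset.Icc 1 j, P l) - D) →
      F (s - t) - F s = t * (((j : ℝ) - 1) * α - ((n : ℝ) - (j : ℝ) + 1) * β) := by
    intro t ht htle
    have ht_s : t ≤ s := le_trans htle (min_le_left _ _)
    have ht_j : t ≤ (s + ∑ l ∈ Finset.Icc 1 j, P l) - D := le_trans htle (min_le_right _ _)
    rw [hF, hF, ← Finset.sum_sub_distrib]
    have hIcc : Finset.Icc 1 n = Finset.Ioc 0 n := (Finset.Icc_add_one_left_eq_Ioc 0 n)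
    rw [hIcc, ← Finset.sum_Ioc_consecutive _ (show 0 ≤ j - 1 by omega)
      (show j - 1 ≤ n by omega)]
    have h1 : ∀ i ∈ Finset.Ioc 0 (j - 1),
        ((α * max 0 (D - ((s - t) + ∑ l ∈ Finset.Icc 1 i, P l)) +
          β * max 0 (((s - t) + ∑ l ∈ Finset.Icc 1 i, P l) - D)) -
         (α * max 0 (D - (s + ∑ l ∈ Finset.Icc 1 i, P l)) +
          β * max 0 ((s + ∑ l ∈ Finset.Icc 1 i, P l) - D))) = α * t := by
      intro i hi
      simp only [Finset.mem_Ioc] at hi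
      have he := hearly i hi.1 (by omega)
      have e1 : max 0 (D - ((s - t) + ∑ l ∈ Finset.Icc 1 i, P l)) =
          D - ((s - t) + ∑ l ∈ Finset.Icc 1 i, P l) := max_eq_right (by linarith)
      have e2 : max 0 (((s - t) + ∑ l ∈ Finset.Icc 1 i, P l) - D) = 0 :=
        max_eq_left (by linarith)
      have e3 : max 0 (D - (s + ∑ l ∈ Finset.Icc 1 i, P l)) =
          D - (s + ∑ l ∈ Finset.Icc 1 i, P l) := max_eq_right (by linarith)
      have e4 : max 0 ((s + ∑ l ∈ Finset.Icc 1 i, P l) - D) = 0 :=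
        max_eq_left (by linarith)
      rw [e1, e2, e3, e4]; ring
    have h2 : ∀ i ∈ Finset.Ioc (j - 1) n,
        ((α * max 0 (D - ((s - t) + ∑ l ∈ Finset.Icc 1 i, P l)) +
          β * max 0 (((s - t) + ∑ l ∈ Finset.Icc 1 i, P l) - D)) -
         (α * max 0 (D - (s + ∑ l ∈ Finset.Icc 1 i, P l)) +
          β * max 0 ((s + ∑ l ∈ Finset.Icc 1 i, P l) - D))) = -(β * t) := by
      intro i hi
      simp only [Finset.mem_Ioc] at hi
      have hij : j ≤ i := by omega
      have htd := htardy i hij hi.2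
      have hmono : (∑ l ∈ Finset.Icc 1 j, P l) ≤ ∑ l ∈ Finset.Icc 1 i, P l := by
        apply Finset.sum_le_sum_of_subset_of_nonneg (Finset.Icc_subset_Icc_right hij)
        intro l hl _
        simp only [Finset.mem_Icc] at hl
        exact (hP l hl.1 (le_trans hl.2 hi.2)).le
      have e1 : max 0 (D - ((s - t) + ∑ l ∈ Finset.Icc 1 i, P l)) = 0 :=
        max_eq_left (by linarith)
      have e2 : max 0 (((s - t) + ∑ l ∈ Finset.Icc 1 i, P l) - D) =
          ((s - t) + ∑ l ∈ Finset.Icc 1 i, P l) - D := max_eq_right (by linarith)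
      have e3 : max 0 (D - (s + ∑ l ∈ Finset.Icc 1 i, P l)) = 0 :=
        max_eq_left (by linarith)
      have e4 : max 0 ((s + ∑ l ∈ Finset.Icc 1 i, P l) - D) =
          (s + ∑ l ∈ Finset.Icc 1 i, P l) - D := max_eq_right (by linarith)
      rw [e1, e2, e3, e4]; ring
    rw [Finset.sum_congr rfl h1, Finset.sum_congr rfl h2, Finset.sum_const,
      Finset.sum_const, Nat.card_Ioc, Nat.card_Ioc]
    have c1 : ((j - 1 - 0 : ℕ) : ℝ) = (j : ℝ) - 1 := by
      rw [Nat.sub_zero, Nat.cast_sub hj1]; norm_num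
    have c2 : ((n - (j - 1) : ℕ) : ℝ) = (n : ℝ) - (j : ℝ) + 1 := by
      have : n - (j - 1) = n - j + 1 := by omega
      rw [this]
      push_cast [Nat.cast_sub hjn]; ring
    rw [nsmul_eq_mul, nsmul_eq_mul, c1, c2]; ring
  refine ⟨key, ?_, ?_⟩
  · intro h t ht htle
    have hk := key t ht htle
    nlinarith [mul_nonneg ht.le (sub_nonneg.mpr h)]
  · intro h t ht htle
    have hk := key t ht htle
    have : t * (((j : ℝ) - 1) * α - ((n : ℝ) - (j : ℝ) + 1) * β) < 0 :=
      mul_neg_of_pos_of_neg ht (by linarith)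
    linarith
end
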